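/- For all τ in the upper half-plane ℍ and all z₁, z₂, z₃, z₄ ∈ ℂ, the following identity of Jacobi theta-products holds: θ(τ,z₁)·θ(τ,z₂)·θ(τ,z₃)·θ(τ,z₄) = θ(τ,(−z₁+z₂+z₃+z₄)/2)·θ(τ,(z₁−z₂+z₃+z₄)/2)·θ(τ,(z₁+z₂−z₃+z₄)/2)·θ(τ,(z₁+z₂+z₃−z₄)/2) + θ(τ,(z₁+z₂+z₃+z₄)/2)·θ(τ,(z₁+z₂−z₃−z₄)/2)·θ(τ,(z₁−z₂−z₃+z₄)/2)·θ(τ,(z₁−z₂+z₃−z₄)/2). -/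

import Mathlib

open Complex Matrix
open scoped Real BigOperators Classical

noncomputable section

abbrev SL2Z := Matrix.SpecialLinearGroup (Fin 2) ℤ

/-- The integral bilinear form attached to a Gram matrix `S`. -/
def bilinZ {ι : Type*} [Fintype ι] (S : Matrix ι ι ℤ) (x y : ι → ℤ) : ℤ :=
  ∑ i, ∑ j, x i * S i j * y j

def bilinQ {ι : Type*} [Fintype ι] (S : Matrix ι ι ℤ) (x y : ι → ℚ) : ℚ :=
  ∑ i, ∑ j, x i * (S i j : ℚ) * y j

def bilinR {ι : Type*} [Fintype ι] (S : Matrix ι ι ℤ) (x y : ι → ℝ) : ℝ :=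
  ∑ i, ∑ j, x i * (S i j : ℝ) * y j

def bilinC {ι : Type*} [Fintype ι] (S : Matrix ι ι ℤ) (x y : ι → ℂ) : ℂ :=
  ∑ i, ∑ j, x i * (S i j : ℂ) * y j

/-- `S` is the Gram matrix of an even positive definite lattice. -/
structure IsEvenPosDef {ι : Type*} [Fintype ι] (S : Matrix ι ι ℤ) : Prop where
  symm : S.IsSymm
  posdef : ∀ x : ι → ℚ, x ≠ 0 → 0 < bilinQ S x x
  even_diag : ∀ i, (2 : ℤ) ∣ S i i

/-- `l ∈ (1/2) L^∨`, written in lattice coordinates:  `2(l,x) ∈ ℤ` for every lattice vector. -/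
def InHalfDual {ι : Type*} [Fintype ι] (S : Matrix ι ι ℤ) (l : ι → ℚ) : Prop :=
  ∀ x : ι → ℤ, ∃ m : ℤ, 2 * bilinQ S l (fun i => (x i : ℚ)) = m

/-- `φ` is a holomorphic Jacobi form of weight `k` and index `t` for the lattice `(ℤ^ι, S)`
with `SL₂(ℤ)`-character (multiplier system) `χ`, Heisenberg character `ν`,
and Fourier coefficients `f`. -/
structure IsJacobiForm {ι : Type*} [Fintype ι] (S : Matrix ι ι ℤ) (k t : ℚ)
    (χ : SL2Z → ℂ) (ν : (ι → ℤ) → (ι → ℤ) → ℂ)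
    (f : ℚ × (ι → ℚ) → ℂ) (φ : ℂ → (ι → ℂ) → ℂ) : Prop where
  holo : DifferentiableOn ℂ (fun p : ℂ × (ι → ℂ) => φ p.1 p.2) {p | 0 < p.1.im}
  modular : ∀ A : SL2Z, ∀ τ : ℂ, 0 < τ.im → ∀ z : ι → ℂ,
    φ (((A.1 0 0 : ℂ) * τ + (A.1 0 1 : ℂ)) / ((A.1 1 0 : ℂ) * τ + (A.1 1 1 : ℂ)))
        (fun i => z i / ((A.1 1 0 : ℂ) * τ + (A.1 1 1 : ℂ)))
      = χ A * ((A.1 1 0 : ℂ) * τ + (A.1 1 1 : ℂ)) ^ (k : ℂ)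
        * Complex.exp ((π : ℂ) * I * (t : ℂ) * (A.1 1 0 : ℂ) * bilinC S z z
            / ((A.1 1 0 : ℂ) * τ + (A.1 1 1 : ℂ)))
        * φ τ z
  elliptic : ∀ x y : ι → ℤ, ∀ τ : ℂ, 0 < τ.im → ∀ z : ι → ℂ,
    φ τ (fun i => z i + (x i : ℂ) * τ + (y i : ℂ))
      = ν x y * Complex.exp (-((π : ℂ) * I * (t : ℂ))
            * ((bilinZ S x x : ℂ) * τ + 2 * bilinC S (fun i => (x i : ℂ)) z))
        * φ τ z
  support : ∀ p : ℚ × (ι → ℚ), f p ≠ 0 →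
    0 ≤ p.1 ∧ InHalfDual S p.2 ∧ 0 ≤ 2 * p.1 * t - bilinQ S p.2 p.2
  expansion : ∀ τ : ℂ, 0 < τ.im → ∀ z : ι → ℂ,
    HasSum (fun p : ℚ × (ι → ℚ) =>
        f p * Complex.exp (2 * (π : ℂ) * I *
          ((p.1 : ℂ) * τ + bilinC S (fun i => (p.2 i : ℂ)) z))) (φ τ z)

/-- The Fourier coefficients `f` are supported on indices of positive hyperbolic norm
(cusp form condition). -/
def IsCuspSupport {ι : Type*} [Fintype ι] (S : Matrix ι ι ℤ) (t : ℚ)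
    (f : ℚ × (ι → ℚ) → ℂ) : Prop :=
  ∀ p : ℚ × (ι → ℚ), f p ≠ 0 → 0 < 2 * p.1 * t - bilinQ S p.2 p.2

/-- `c` is a root of unity. -/
def HasFiniteOrder (c : ℂ) : Prop := ∃ N : ℕ, 0 < N ∧ c ^ N = 1

/-- The quadratic character mod 4. -/
def chi4 (n : ℤ) : ℂ := if n % 4 = 1 then 1 else if n % 4 = 3 then -1 else 0

/-- The classical Jacobi theta-series of characteristic `(1/2,1/2)`. -/
def jtheta (τ z : ℂ) : ℂ :=
  ∑' n : ℤ, chi4 n *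
    Complex.exp (2 * (π : ℂ) * I * (((n : ℂ) ^ 2 * τ) / 8 + (n : ℂ) * z / 2))

/-- The Dedekind eta function. -/
def dedekindEta (τ : ℂ) : ℂ :=
  Complex.exp ((π : ℂ) * I * τ / 12) *
    ∏' n : ℕ, (1 - Complex.exp (2 * (π : ℂ) * I * ((n : ℂ) + 1) * τ))


set_option maxHeartbeats 1000000

namespace Statement18Aux

abbrev Q4 := ℤ × ℤ × ℤ × ℤ

def ct (τ z : ℂ) (n : ℤ) : ℂ :=
  chi4 n * Complex.exp (2 * (π : ℂ) * I * (((n : ℂ) ^ 2 * τ) / 8 + (n : ℂ) * z / 2))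

lemma jtheta_eq (τ z : ℂ) : jtheta τ z = ∑' n : ℤ, ct τ z n := rfl

lemma ct_eq (τ z : ℂ) (n : ℤ) :
    ct τ z n = chi4 n * jacobiTheta₂_term n (z / 2) (τ / 4) := by
  unfold ct jacobiTheta₂_term
  congr 2
  ring

lemma chi4_norm_le (n : ℤ) : ‖chi4 n‖ ≤ 1 := by
  unfold chi4
  split_ifs <;> simp

lemma summable_norm_ct {τ : ℂ} (hτ : 0 < τ.im) (z : ℂ) :
    Summable fun n : ℤ => ‖ct τ z n‖ := by
  have h4 : 0 < (τ / 4).im := by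
    rw [Complex.div_ofNat_im]
    linarith
  have hs : Summable fun n : ℤ => jacobiTheta₂_term n (z / 2) (τ / 4) :=
    (summable_jacobiTheta₂_term_iff (z / 2) (τ / 4)).2 h4
  have hs' : Summable fun n : ℤ => ‖jacobiTheta₂_term n (z / 2) (τ / 4)‖ :=
    summable_norm_iff.2 hs
  apply Summable.of_nonneg_of_le (fun n => norm_nonneg _) _ hs'
  intro n
  rw [ct_eq, norm_mul]
  calc ‖chi4 n‖ * ‖jacobiTheta₂_term n (z / 2) (τ / 4)‖
      ≤ 1 * ‖jacobiTheta₂_term n (z / 2) (τ / 4)‖ :=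
        mul_le_mul_of_nonneg_right (chi4_norm_le n) (norm_nonneg _)
    _ = _ := one_mul _

def Lt (τ z₁ z₂ z₃ z₄ : ℂ) (n : Q4) : ℂ :=
  ct τ z₁ n.1 * ct τ z₂ n.2.1 * ct τ z₃ n.2.2.1 * ct τ z₄ n.2.2.2

lemma summable_norm_Lt {τ : ℂ} (hτ : 0 < τ.im) (z₁ z₂ z₃ z₄ : ℂ) :
    Summable fun n : Q4 => ‖Lt τ z₁ z₂ z₃ z₄ n‖ := by
  have h1 := summable_norm_ct hτ z₁
  have h2 := summable_norm_ct hτ z₂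
  have h3 := summable_norm_ct hτ z₃
  have h4 := summable_norm_ct hτ z₄
  have h34 : Summable fun p : ℤ × ℤ => ‖ct τ z₃ p.1 * ct τ z₄ p.2‖ := h3.mul_norm h4
  have h234 : Summable fun p : ℤ × (ℤ × ℤ) => ‖ct τ z₂ p.1 * (ct τ z₃ p.2.1 * ct τ z₄ p.2.2)‖ :=
    Summable.mul_norm (f := ct τ z₂) (g := fun p : ℤ × ℤ => ct τ z₃ p.1 * ct τ z₄ p.2) h2 h34
  have h1234 : Summable fun p : ℤ × (ℤ × (ℤ × ℤ)) =>
      ‖ct τ z₁ p.1 * (ct τ z₂ p.2.1 * (ct τ z₃ p.2.2.1 * ct τ z₄ p.2.2.2))‖ :=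
    Summable.mul_norm (f := ct τ z₁)
      (g := fun p : ℤ × (ℤ × ℤ) => ct τ z₂ p.1 * (ct τ z₃ p.2.1 * ct τ z₄ p.2.2)) h1 h234
  apply h1234.congr
  intro n
  unfold Lt
  rw [show ct τ z₁ n.1 * ct τ z₂ n.2.1 * ct τ z₃ n.2.2.1 * ct τ z₄ n.2.2.2
      = ct τ z₁ n.1 * (ct τ z₂ n.2.1 * (ct τ z₃ n.2.2.1 * ct τ z₄ n.2.2.2)) from by ring]

lemma summable_Lt {τ : ℂ} (hτ : 0 < τ.im) (z₁ z₂ z₃ z₄ : ℂ) :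
    Summable (Lt τ z₁ z₂ z₃ z₄) := (summable_norm_Lt hτ z₁ z₂ z₃ z₄).of_norm

lemma prod4 {τ : ℂ} (hτ : 0 < τ.im) (z₁ z₂ z₃ z₄ : ℂ) :
    jtheta τ z₁ * jtheta τ z₂ * jtheta τ z₃ * jtheta τ z₄
      = ∑' n : Q4, Lt τ z₁ z₂ z₃ z₄ n := by
  have h1 := summable_norm_ct hτ z₁
  have h2 := summable_norm_ct hτ z₂
  have h3 := summable_norm_ct hτ z₃
  have h4 := summable_norm_ct hτ z₄
  have e34 : jtheta τ z₃ * jtheta τ z₄ = ∑' p : ℤ × ℤ, ct τ z₃ p.1 * ct τ z₄ p.2 := by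
    rw [jtheta_eq, jtheta_eq]; exact tsum_mul_tsum_of_summable_norm h3 h4
  have e234 : jtheta τ z₂ * (jtheta τ z₃ * jtheta τ z₄)
      = ∑' p : ℤ × (ℤ × ℤ), ct τ z₂ p.1 * (ct τ z₃ p.2.1 * ct τ z₄ p.2.2) := by
    rw [e34, jtheta_eq]
    exact tsum_mul_tsum_of_summable_norm (f := ct τ z₂)
      (g := fun p : ℤ × ℤ => ct τ z₃ p.1 * ct τ z₄ p.2) h2 (h3.mul_norm h4)
  have e1234 : jtheta τ z₁ * (jtheta τ z₂ * (jtheta τ z₃ * jtheta τ z₄))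
      = ∑' p : Q4, ct τ z₁ p.1 * (ct τ z₂ p.2.1 * (ct τ z₃ p.2.2.1 * ct τ z₄ p.2.2.2)) := by
    rw [e234, jtheta_eq]
    exact tsum_mul_tsum_of_summable_norm (f := ct τ z₁)
      (g := fun p : ℤ × (ℤ × ℤ) => ct τ z₂ p.1 * (ct τ z₃ p.2.1 * ct τ z₄ p.2.2)) h1
      (Summable.mul_norm (f := ct τ z₂) (g := fun p : ℤ × ℤ => ct τ z₃ p.1 * ct τ z₄ p.2) h2
        (h3.mul_norm h4))
  calc jtheta τ z₁ * jtheta τ z₂ * jtheta τ z₃ * jtheta τ z₄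
      = jtheta τ z₁ * (jtheta τ z₂ * (jtheta τ z₃ * jtheta τ z₄)) := by ring
    _ = _ := by rw [e1234]; exact tsum_congr fun n => by unfold Lt; ring

lemma mul4exp (x1 x2 x3 x4 e1 e2 e3 e4 : ℂ) :
    x1 * Complex.exp e1 * (x2 * Complex.exp e2) * (x3 * Complex.exp e3) * (x4 * Complex.exp e4)
      = x1 * x2 * x3 * x4 * Complex.exp (e1 + e2 + e3 + e4) := by
  rw [Complex.exp_add, Complex.exp_add, Complex.exp_add]; ring

lemma Lt_eq (τ z₁ z₂ z₃ z₄ : ℂ) (a b c d : ℤ) :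
    Lt τ z₁ z₂ z₃ z₄ (a, b, c, d)
      = chi4 a * chi4 b * chi4 c * chi4 d *
        Complex.exp (2 * (π : ℂ) * I *
          ((((a : ℂ)^2 + (b : ℂ)^2 + (c : ℂ)^2 + (d : ℂ)^2) * τ) / 8
            + ((a : ℂ) * z₁ + (b : ℂ) * z₂ + (c : ℂ) * z₃ + (d : ℂ) * z₄) / 2)) := by
  show ct τ z₁ a * ct τ z₂ b * ct τ z₃ c * ct τ z₄ d = _
  unfold ct
  rw [mul4exp]
  congr 1
  ring

lemma chi4_even {n : ℤ} (h : n % 2 = 0) : chi4 n = 0 := by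
  unfold chi4; rw [if_neg (by omega), if_neg (by omega)]

lemma chi4_prod_zero {a b c d : ℤ} (ha : a % 2 = 1) (hb : b % 2 = 1) (hc : c % 2 = 1)
    (hd : d % 2 = 1) (hs : (a + b + c + d) % 4 = 0) :
    chi4 a * chi4 b * chi4 c * chi4 d = 1 := by
  rcases (show a % 4 = 1 ∨ a % 4 = 3 by omega) with h1 | h1 <;>
  rcases (show b % 4 = 1 ∨ b % 4 = 3 by omega) with h2 | h2 <;>
  rcases (show c % 4 = 1 ∨ c % 4 = 3 by omega) with h3 | h3 <;>
  rcases (show d % 4 = 1 ∨ d % 4 = 3 by omega) with h4 | h4 <;>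
  first
    | (exfalso; omega)
    | (simp only [chi4, h1, h2, h3, h4]; norm_num)

lemma chi4_prod_two {a b c d : ℤ} (ha : a % 2 = 1) (hb : b % 2 = 1) (hc : c % 2 = 1)
    (hd : d % 2 = 1) (hs : (a + b + c + d) % 4 = 2) :
    chi4 a * chi4 b * chi4 c * chi4 d = -1 := by
  rcases (show a % 4 = 1 ∨ a % 4 = 3 by omega) with h1 | h1 <;>
  rcases (show b % 4 = 1 ∨ b % 4 = 3 by omega) with h2 | h2 <;>
  rcases (show c % 4 = 1 ∨ c % 4 = 3 by omega) with h3 | h3 <;>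
  rcases (show d % 4 = 1 ∨ d % 4 = 3 by omega) with h4 | h4 <;>
  first
    | (exfalso; omega)
    | (simp only [chi4, h1, h2, h3, h4]; norm_num)

lemma chi4_ne_zero_odd {n : ℤ} (h : chi4 n ≠ 0) : n % 2 = 1 := by
  by_contra h'
  exact h (chi4_even (by omega))


def A0 : Set Q4 := {n | n.1 % 2 = 1 ∧ n.2.1 % 2 = 1 ∧ n.2.2.1 % 2 = 1 ∧ n.2.2.2 % 2 = 1 ∧
  (n.1 + n.2.1 + n.2.2.1 + n.2.2.2) % 4 = 0}

def A2 : Set Q4 := {n | n.1 % 2 = 1 ∧ n.2.1 % 2 = 1 ∧ n.2.2.1 % 2 = 1 ∧ n.2.2.2 % 2 = 1 ∧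
  (n.1 + n.2.1 + n.2.2.1 + n.2.2.2) % 4 = 2}

def Hm (n : Q4) : Q4 :=
  ((n.1 + n.2.1 + n.2.2.1 + n.2.2.2) / 2 - n.1,
   (n.1 + n.2.1 + n.2.2.1 + n.2.2.2) / 2 - n.2.1,
   (n.1 + n.2.1 + n.2.2.1 + n.2.2.2) / 2 - n.2.2.1,
   (n.1 + n.2.1 + n.2.2.1 + n.2.2.2) / 2 - n.2.2.2)

def Km (n : Q4) : Q4 :=
  ((n.1 + n.2.1 + n.2.2.1 + n.2.2.2) / 2,
   (n.1 + n.2.1 - n.2.2.1 - n.2.2.2) / 2,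
   (n.1 - n.2.1 - n.2.2.1 + n.2.2.2) / 2,
   (n.1 - n.2.1 + n.2.2.1 - n.2.2.2) / 2)

lemma mem_A0_iff (a b c d : ℤ) : (a, b, c, d) ∈ A0 ↔
    (a % 2 = 1 ∧ b % 2 = 1 ∧ c % 2 = 1 ∧ d % 2 = 1 ∧ (a + b + c + d) % 4 = 0) := Iff.rfl

lemma mem_A2_iff (a b c d : ℤ) : (a, b, c, d) ∈ A2 ↔
    (a % 2 = 1 ∧ b % 2 = 1 ∧ c % 2 = 1 ∧ d % 2 = 1 ∧ (a + b + c + d) % 4 = 2) := Iff.rfl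

lemma Hm_eq (a b c d t : ℤ) (ht : 2 * t = a + b + c + d) :
    Hm (a, b, c, d) = (t - a, t - b, t - c, t - d) := by
  simp only [Hm, Prod.mk.injEq]
  refine ⟨by omega, by omega, by omega, by omega⟩

lemma Km_eq (a b c d p q r s : ℤ) (hp : 2 * p = a + b + c + d) (hq : 2 * q = a + b - c - d)
    (hr : 2 * r = a - b - c + d) (hs : 2 * s = a - b + c - d) :
    Km (a, b, c, d) = (p, q, r, s) := by
  simp only [Km, Prod.mk.injEq]
  refine ⟨by omega, by omega, by omega, by omega⟩


lemma Hm_mem_A0 {n : Q4} (h : n ∈ A0) : Hm n ∈ A0 := by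
  obtain ⟨a, b, c, d⟩ := n
  obtain ⟨h1, h2, h3, h4, h5⟩ := (mem_A0_iff a b c d).1 h
  obtain ⟨t, ht⟩ : ∃ t, 2 * t = a + b + c + d := ⟨(a + b + c + d) / 2, by omega⟩
  rw [Hm_eq a b c d t ht]
  exact (mem_A0_iff _ _ _ _).2 ⟨by omega, by omega, by omega, by omega, by omega⟩

lemma Hm_Hm_A0 {n : Q4} (h : n ∈ A0) : Hm (Hm n) = n := by
  obtain ⟨a, b, c, d⟩ := n
  obtain ⟨h1, h2, h3, h4, h5⟩ := (mem_A0_iff a b c d).1 h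
  obtain ⟨t, ht⟩ : ∃ t, 2 * t = a + b + c + d := ⟨(a + b + c + d) / 2, by omega⟩
  rw [Hm_eq a b c d t ht, Hm_eq (t - a) (t - b) (t - c) (t - d) t (by omega)]
  simp only [Prod.mk.injEq]
  refine ⟨by omega, by omega, by omega, by omega⟩

lemma Km_mem_A2 {n : Q4} (h : n ∈ A2) : Km n ∈ A2 := by
  obtain ⟨a, b, c, d⟩ := n
  obtain ⟨h1, h2, h3, h4, h5⟩ := (mem_A2_iff a b c d).1 h
  obtain ⟨p, hp⟩ : ∃ p, 2 * p = a + b + c + d := ⟨(a + b + c + d) / 2, by omega⟩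
  obtain ⟨q, hq⟩ : ∃ q, 2 * q = a + b - c - d := ⟨(a + b - c - d) / 2, by omega⟩
  obtain ⟨r, hr⟩ : ∃ r, 2 * r = a - b - c + d := ⟨(a - b - c + d) / 2, by omega⟩
  obtain ⟨s, hs⟩ : ∃ s, 2 * s = a - b + c - d := ⟨(a - b + c - d) / 2, by omega⟩
  rw [Km_eq a b c d p q r s hp hq hr hs]
  exact (mem_A2_iff _ _ _ _).2 ⟨by omega, by omega, by omega, by omega, by omega⟩

lemma Km_Km_A2 {n : Q4} (h : n ∈ A2) : Km (Km n) = n := by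
  obtain ⟨a, b, c, d⟩ := n
  obtain ⟨h1, h2, h3, h4, h5⟩ := (mem_A2_iff a b c d).1 h
  obtain ⟨p, hp⟩ : ∃ p, 2 * p = a + b + c + d := ⟨(a + b + c + d) / 2, by omega⟩
  obtain ⟨q, hq⟩ : ∃ q, 2 * q = a + b - c - d := ⟨(a + b - c - d) / 2, by omega⟩
  obtain ⟨r, hr⟩ : ∃ r, 2 * r = a - b - c + d := ⟨(a - b - c + d) / 2, by omega⟩
  obtain ⟨s, hs⟩ : ∃ s, 2 * s = a - b + c - d := ⟨(a - b + c - d) / 2, by omega⟩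
  rw [Km_eq a b c d p q r s hp hq hr hs,
    Km_eq p q r s a b c d (by omega) (by omega) (by omega) (by omega)]

lemma HmKm_mem_A2 {n : Q4} (h : n ∈ A0) : Hm (Km n) ∈ A2 := by
  obtain ⟨a, b, c, d⟩ := n
  obtain ⟨h1, h2, h3, h4, h5⟩ := (mem_A0_iff a b c d).1 h
  obtain ⟨p, hp⟩ : ∃ p, 2 * p = a + b + c + d := ⟨(a + b + c + d) / 2, by omega⟩
  obtain ⟨q, hq⟩ : ∃ q, 2 * q = a + b - c - d := ⟨(a + b - c - d) / 2, by omega⟩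
  obtain ⟨r, hr⟩ : ∃ r, 2 * r = a - b - c + d := ⟨(a - b - c + d) / 2, by omega⟩
  obtain ⟨s, hs⟩ : ∃ s, 2 * s = a - b + c - d := ⟨(a - b + c - d) / 2, by omega⟩
  rw [Km_eq a b c d p q r s hp hq hr hs, Hm_eq p q r s a (by omega)]
  exact (mem_A2_iff _ _ _ _).2 ⟨by omega, by omega, by omega, by omega, by omega⟩

lemma KmHm_mem_A0 {n : Q4} (h : n ∈ A2) : Km (Hm n) ∈ A0 := by
  obtain ⟨a, b, c, d⟩ := n
  obtain ⟨h1, h2, h3, h4, h5⟩ := (mem_A2_iff a b c d).1 h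
  obtain ⟨t, ht⟩ : ∃ t, 2 * t = a + b + c + d := ⟨(a + b + c + d) / 2, by omega⟩
  obtain ⟨q, hq⟩ : ∃ q, 2 * q = c + d - a - b := ⟨(c + d - a - b) / 2, by omega⟩
  obtain ⟨r, hr⟩ : ∃ r, 2 * r = b + c - a - d := ⟨(b + c - a - d) / 2, by omega⟩
  obtain ⟨s, hs⟩ : ∃ s, 2 * s = b + d - a - c := ⟨(b + d - a - c) / 2, by omega⟩
  rw [Hm_eq a b c d t ht,
    Km_eq (t - a) (t - b) (t - c) (t - d) t q r s (by omega) (by omega) (by omega) (by omega)]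
  exact (mem_A0_iff _ _ _ _).2 ⟨by omega, by omega, by omega, by omega, by omega⟩

lemma KmHmHmKm_A0 {n : Q4} (h : n ∈ A0) : Km (Hm (Hm (Km n))) = n := by
  obtain ⟨a, b, c, d⟩ := n
  obtain ⟨h1, h2, h3, h4, h5⟩ := (mem_A0_iff a b c d).1 h
  obtain ⟨p, hp⟩ : ∃ p, 2 * p = a + b + c + d := ⟨(a + b + c + d) / 2, by omega⟩
  obtain ⟨q, hq⟩ : ∃ q, 2 * q = a + b - c - d := ⟨(a + b - c - d) / 2, by omega⟩
  obtain ⟨r, hr⟩ : ∃ r, 2 * r = a - b - c + d := ⟨(a - b - c + d) / 2, by omega⟩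
  obtain ⟨s, hs⟩ : ∃ s, 2 * s = a - b + c - d := ⟨(a - b + c - d) / 2, by omega⟩
  rw [Km_eq a b c d p q r s hp hq hr hs, Hm_eq p q r s a (by omega),
    Hm_eq (a - p) (a - q) (a - r) (a - s) a (by omega)]
  rw [show (a - (a - p), a - (a - q), a - (a - r), a - (a - s)) = (p, q, r, s) from by
    simp only [Prod.mk.injEq]; refine ⟨by omega, by omega, by omega, by omega⟩]
  rw [Km_eq p q r s a b c d (by omega) (by omega) (by omega) (by omega)]

lemma HmKmKmHm_A2 {n : Q4} (h : n ∈ A2) : Hm (Km (Km (Hm n))) = n := by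
  obtain ⟨a, b, c, d⟩ := n
  obtain ⟨h1, h2, h3, h4, h5⟩ := (mem_A2_iff a b c d).1 h
  obtain ⟨t, ht⟩ : ∃ t, 2 * t = a + b + c + d := ⟨(a + b + c + d) / 2, by omega⟩
  obtain ⟨q, hq⟩ : ∃ q, 2 * q = c + d - a - b := ⟨(c + d - a - b) / 2, by omega⟩
  obtain ⟨r, hr⟩ : ∃ r, 2 * r = b + c - a - d := ⟨(b + c - a - d) / 2, by omega⟩
  obtain ⟨s, hs⟩ : ∃ s, 2 * s = b + d - a - c := ⟨(b + d - a - c) / 2, by omega⟩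
  rw [Hm_eq a b c d t ht,
    Km_eq (t - a) (t - b) (t - c) (t - d) t q r s (by omega) (by omega) (by omega) (by omega),
    Km_eq t q r s (t - a) (t - b) (t - c) (t - d) (by omega) (by omega) (by omega) (by omega),
    Hm_eq (t - a) (t - b) (t - c) (t - d) t (by omega)]
  simp only [Prod.mk.injEq]
  refine ⟨by omega, by omega, by omega, by omega⟩

def e0 : A0 ≃ A0 where
  toFun x := ⟨Hm x.1, Hm_mem_A0 x.2⟩
  invFun x := ⟨Hm x.1, Hm_mem_A0 x.2⟩
  left_inv x := Subtype.ext (Hm_Hm_A0 x.2)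
  right_inv x := Subtype.ext (Hm_Hm_A0 x.2)

def e2 : A2 ≃ A2 where
  toFun x := ⟨Km x.1, Km_mem_A2 x.2⟩
  invFun x := ⟨Km x.1, Km_mem_A2 x.2⟩
  left_inv x := Subtype.ext (Km_Km_A2 x.2)
  right_inv x := Subtype.ext (Km_Km_A2 x.2)

def ePsi : A0 ≃ A2 where
  toFun x := ⟨Hm (Km x.1), HmKm_mem_A2 x.2⟩
  invFun x := ⟨Km (Hm x.1), KmHm_mem_A0 x.2⟩
  left_inv x := Subtype.ext (KmHmHmKm_A0 x.2)
  right_inv x := Subtype.ext (HmKmKmHm_A2 x.2)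

lemma castdiv2 {m : ℤ} {x : ℂ} (h : (2 : ℂ) * (m : ℂ) = x) : (m : ℂ) = x / 2 := by
  linear_combination h / 2

lemma cast2 {m a b c d : ℤ} (h : 2 * m = a + b + c + d) :
    (m : ℂ) = ((a : ℂ) + (b : ℂ) + (c : ℂ) + (d : ℂ)) / 2 := by
  have h2 : (2 : ℂ) * (m : ℂ) = (a : ℂ) + (b : ℂ) + (c : ℂ) + (d : ℂ) := by exact_mod_cast h
  linear_combination h2 / 2

lemma key0 (τ z₁ z₂ z₃ z₄ : ℂ) {n : Q4} (h : n ∈ A0) :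
    Lt τ ((-z₁ + z₂ + z₃ + z₄) / 2) ((z₁ - z₂ + z₃ + z₄) / 2) ((z₁ + z₂ - z₃ + z₄) / 2)
        ((z₁ + z₂ + z₃ - z₄) / 2) (Hm n)
      = Lt τ z₁ z₂ z₃ z₄ n := by
  obtain ⟨a, b, c, d⟩ := n
  obtain ⟨h1, h2, h3, h4, h5⟩ := (mem_A0_iff a b c d).1 h
  obtain ⟨t, ht⟩ : ∃ t, 2 * t = a + b + c + d := ⟨(a + b + c + d) / 2, by omega⟩
  rw [Hm_eq a b c d t ht, Lt_eq, Lt_eq,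
    chi4_prod_zero (by omega) (by omega) (by omega) (by omega) (by omega),
    chi4_prod_zero h1 h2 h3 h4 h5]
  congr 2
  have htC : (t : ℂ) = ((a : ℂ) + (b : ℂ) + (c : ℂ) + (d : ℂ)) / 2 := cast2 ht
  push_cast
  rw [htC]
  ring

lemma key2 (τ z₁ z₂ z₃ z₄ : ℂ) {n : Q4} (h : n ∈ A2) :
    Lt τ ((z₁ + z₂ + z₃ + z₄) / 2) ((z₁ + z₂ - z₃ - z₄) / 2) ((z₁ - z₂ - z₃ + z₄) / 2)
        ((z₁ - z₂ + z₃ - z₄) / 2) (Km n)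
      = Lt τ z₁ z₂ z₃ z₄ n := by
  obtain ⟨a, b, c, d⟩ := n
  obtain ⟨h1, h2, h3, h4, h5⟩ := (mem_A2_iff a b c d).1 h
  obtain ⟨p, hp⟩ : ∃ p, 2 * p = a + b + c + d := ⟨(a + b + c + d) / 2, by omega⟩
  obtain ⟨q, hq⟩ : ∃ q, 2 * q = a + b - c - d := ⟨(a + b - c - d) / 2, by omega⟩
  obtain ⟨r, hr⟩ : ∃ r, 2 * r = a - b - c + d := ⟨(a - b - c + d) / 2, by omega⟩
  obtain ⟨s, hs⟩ : ∃ s, 2 * s = a - b + c - d := ⟨(a - b + c - d) / 2, by omega⟩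
  rw [Km_eq a b c d p q r s hp hq hr hs, Lt_eq, Lt_eq,
    chi4_prod_two (by omega) (by omega) (by omega) (by omega) (by omega),
    chi4_prod_two h1 h2 h3 h4 h5]
  congr 2
  have hpC : (p : ℂ) = ((a : ℂ) + (b : ℂ) + (c : ℂ) + (d : ℂ)) / 2 := cast2 hp
  have hqC : (q : ℂ) = ((a : ℂ) + (b : ℂ) - (c : ℂ) - (d : ℂ)) / 2 :=
    castdiv2 (by exact_mod_cast congrArg (fun m : ℤ => (m : ℂ)) hq)
  have hrC : (r : ℂ) = ((a : ℂ) - (b : ℂ) - (c : ℂ) + (d : ℂ)) / 2 :=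
    castdiv2 (by exact_mod_cast congrArg (fun m : ℤ => (m : ℂ)) hr)
  have hsC : (s : ℂ) = ((a : ℂ) - (b : ℂ) + (c : ℂ) - (d : ℂ)) / 2 :=
    castdiv2 (by exact_mod_cast congrArg (fun m : ℤ => (m : ℂ)) hs)
  push_cast
  rw [hpC, hqC, hrC, hsC]
  ring

lemma keyPsi (τ z₁ z₂ z₃ z₄ : ℂ) {n : Q4} (h : n ∈ A0) :
    Lt τ ((-z₁ + z₂ + z₃ + z₄) / 2) ((z₁ - z₂ + z₃ + z₄) / 2) ((z₁ + z₂ - z₃ + z₄) / 2)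
        ((z₁ + z₂ + z₃ - z₄) / 2) (Hm (Km n))
      = - Lt τ ((z₁ + z₂ + z₃ + z₄) / 2) ((z₁ + z₂ - z₃ - z₄) / 2) ((z₁ - z₂ - z₃ + z₄) / 2)
          ((z₁ - z₂ + z₃ - z₄) / 2) n := by
  obtain ⟨a, b, c, d⟩ := n
  obtain ⟨h1, h2, h3, h4, h5⟩ := (mem_A0_iff a b c d).1 h
  obtain ⟨p, hp⟩ : ∃ p, 2 * p = a + b + c + d := ⟨(a + b + c + d) / 2, by omega⟩
  obtain ⟨q, hq⟩ : ∃ q, 2 * q = a + b - c - d := ⟨(a + b - c - d) / 2, by omega⟩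
  obtain ⟨r, hr⟩ : ∃ r, 2 * r = a - b - c + d := ⟨(a - b - c + d) / 2, by omega⟩
  obtain ⟨s, hs⟩ : ∃ s, 2 * s = a - b + c - d := ⟨(a - b + c - d) / 2, by omega⟩
  rw [Km_eq a b c d p q r s hp hq hr hs, Hm_eq p q r s a (by omega), Lt_eq, Lt_eq,
    chi4_prod_two (by omega) (by omega) (by omega) (by omega) (by omega),
    chi4_prod_zero h1 h2 h3 h4 h5]
  have hpC : (p : ℂ) = ((a : ℂ) + (b : ℂ) + (c : ℂ) + (d : ℂ)) / 2 := cast2 hp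
  have hqC : (q : ℂ) = ((a : ℂ) + (b : ℂ) - (c : ℂ) - (d : ℂ)) / 2 :=
    castdiv2 (by exact_mod_cast congrArg (fun m : ℤ => (m : ℂ)) hq)
  have hrC : (r : ℂ) = ((a : ℂ) - (b : ℂ) - (c : ℂ) + (d : ℂ)) / 2 :=
    castdiv2 (by exact_mod_cast congrArg (fun m : ℤ => (m : ℂ)) hr)
  have hsC : (s : ℂ) = ((a : ℂ) - (b : ℂ) + (c : ℂ) - (d : ℂ)) / 2 :=
    castdiv2 (by exact_mod_cast congrArg (fun m : ℤ => (m : ℂ)) hs)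
  rw [neg_one_mul, one_mul, neg_inj]
  congr 1
  push_cast
  rw [hpC, hqC, hrC, hsC]
  ring

lemma Lt_support (τ z₁ z₂ z₃ z₄ : ℂ) :
    Function.support (Lt τ z₁ z₂ z₃ z₄) ⊆ A0 ∪ A2 := by
  intro n hn
  obtain ⟨a, b, c, d⟩ := n
  rw [Function.mem_support, Lt_eq] at hn
  have hne : chi4 a * chi4 b * chi4 c * chi4 d ≠ 0 := fun h0 => hn (by rw [h0, zero_mul])
  have ha : a % 2 = 1 := chi4_ne_zero_odd fun h0 => hne (by rw [h0]; ring)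
  have hb : b % 2 = 1 := chi4_ne_zero_odd fun h0 => hne (by rw [h0]; ring)
  have hc : c % 2 = 1 := chi4_ne_zero_odd fun h0 => hne (by rw [h0]; ring)
  have hd : d % 2 = 1 := chi4_ne_zero_odd fun h0 => hne (by rw [h0]; ring)
  rcases (show (a + b + c + d) % 4 = 0 ∨ (a + b + c + d) % 4 = 2 by omega) with h0 | h0
  · exact Or.inl ((mem_A0_iff a b c d).2 ⟨ha, hb, hc, hd, h0⟩)
  · exact Or.inr ((mem_A2_iff a b c d).2 ⟨ha, hb, hc, hd, h0⟩)

lemma disjA : Disjoint A0 A2 := by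
  rw [Set.disjoint_left]
  rintro ⟨a, b, c, d⟩ hx hy
  obtain ⟨_, _, _, _, h5⟩ := (mem_A0_iff a b c d).1 hx
  obtain ⟨_, _, _, _, h5'⟩ := (mem_A2_iff a b c d).1 hy
  omega

lemma tsum_split {τ : ℂ} (hτ : 0 < τ.im) (z₁ z₂ z₃ z₄ : ℂ) :
    ∑' n : Q4, Lt τ z₁ z₂ z₃ z₄ n
      = (∑' x : A0, Lt τ z₁ z₂ z₃ z₄ ↑x) + ∑' x : A2, Lt τ z₁ z₂ z₃ z₄ ↑x := by
  have hs := summable_Lt hτ z₁ z₂ z₃ z₄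
  rw [← tsum_subtype_eq_of_support_subset (Lt_support τ z₁ z₂ z₃ z₄),
    Summable.tsum_union_disjoint disjA (hs.subtype _) (hs.subtype _)]

end Statement18Aux

open Statement18Aux in
/-- The quartic theta identity `θ_{D₄} = θ_{D₄}^{(2)} + θ_{D₄}^{(3)}`:
for all `τ ∈ ℍ` and `z₁,…,z₄ ∈ ℂ`,
`θ(z₁)θ(z₂)θ(z₃)θ(z₄)` equals the sum of the two half-coordinate theta-products. -/
theorem statement18 (τ z₁ z₂ z₃ z₄ : ℂ) (hτ : 0 < τ.im) :
    jtheta τ z₁ * jtheta τ z₂ * jtheta τ z₃ * jtheta τ z₄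
      = jtheta τ ((-z₁ + z₂ + z₃ + z₄) / 2) * jtheta τ ((z₁ - z₂ + z₃ + z₄) / 2)
          * jtheta τ ((z₁ + z₂ - z₃ + z₄) / 2) * jtheta τ ((z₁ + z₂ + z₃ - z₄) / 2)
        + jtheta τ ((z₁ + z₂ + z₃ + z₄) / 2) * jtheta τ ((z₁ + z₂ - z₃ - z₄) / 2)
          * jtheta τ ((z₁ - z₂ - z₃ + z₄) / 2) * jtheta τ ((z₁ - z₂ + z₃ - z₄) / 2) := by
  rw [prod4 hτ z₁ z₂ z₃ z₄, prod4 hτ _ _ _ _, prod4 hτ _ _ _ _,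
    tsum_split hτ z₁ z₂ z₃ z₄, tsum_split hτ _ _ _ _, tsum_split hτ _ _ _ _]
  have E1 : (∑' x : A0, Lt τ ((-z₁ + z₂ + z₃ + z₄) / 2) ((z₁ - z₂ + z₃ + z₄) / 2)
        ((z₁ + z₂ - z₃ + z₄) / 2) ((z₁ + z₂ + z₃ - z₄) / 2) ↑x)
      = ∑' x : A0, Lt τ z₁ z₂ z₃ z₄ ↑x := by
    rw [← Equiv.tsum_eq e0 (fun x : A0 => Lt τ ((-z₁ + z₂ + z₃ + z₄) / 2)
      ((z₁ - z₂ + z₃ + z₄) / 2) ((z₁ + z₂ - z₃ + z₄) / 2) ((z₁ + z₂ + z₃ - z₄) / 2) ↑x)]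
    exact tsum_congr fun x => key0 τ z₁ z₂ z₃ z₄ x.2
  have E2 : (∑' x : A2, Lt τ ((z₁ + z₂ + z₃ + z₄) / 2) ((z₁ + z₂ - z₃ - z₄) / 2)
        ((z₁ - z₂ - z₃ + z₄) / 2) ((z₁ - z₂ + z₃ - z₄) / 2) ↑x)
      = ∑' x : A2, Lt τ z₁ z₂ z₃ z₄ ↑x := by
    rw [← Equiv.tsum_eq e2 (fun x : A2 => Lt τ ((z₁ + z₂ + z₃ + z₄) / 2)
      ((z₁ + z₂ - z₃ - z₄) / 2) ((z₁ - z₂ - z₃ + z₄) / 2) ((z₁ - z₂ + z₃ - z₄) / 2) ↑x)]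
    exact tsum_congr fun x => key2 τ z₁ z₂ z₃ z₄ x.2
  have E3 : (∑' x : A2, Lt τ ((-z₁ + z₂ + z₃ + z₄) / 2) ((z₁ - z₂ + z₃ + z₄) / 2)
        ((z₁ + z₂ - z₃ + z₄) / 2) ((z₁ + z₂ + z₃ - z₄) / 2) ↑x)
      = - ∑' x : A0, Lt τ ((z₁ + z₂ + z₃ + z₄) / 2) ((z₁ + z₂ - z₃ - z₄) / 2)
          ((z₁ - z₂ - z₃ + z₄) / 2) ((z₁ - z₂ + z₃ - z₄) / 2) ↑x := by
    rw [← Equiv.tsum_eq ePsi (fun x : A2 => Lt τ ((-z₁ + z₂ + z₃ + z₄) / 2)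
      ((z₁ - z₂ + z₃ + z₄) / 2) ((z₁ + z₂ - z₃ + z₄) / 2) ((z₁ + z₂ + z₃ - z₄) / 2) ↑x),
      ← tsum_neg]
    exact tsum_congr fun x => keyPsi τ z₁ z₂ z₃ z₄ x.2
  rw [E1, E2, E3]
  ring
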